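/- Fix T > 0, a nonempty compact set E ⊆ ℝ, continuous f, g : ℝ × E → ℝ, mesh numbers N_x, N_t ≥ 1, Δx = 1/N_x, Δt = T/N_t, α = Δt/Δx, grid points x_i = i·Δx, and f⁺ = max(f,0), f⁻ = min(f,0). Define, for 2N_x-periodic W : ℤ → ℝ, the upwind scheme operator F[W](i) = W_i + Δt · min_{A∈E} ( f⁺(x_i,A)·(W_{i+1} − W_i)/Δx + f⁻(x_i,A)·(W_i − W_{i−1})/Δx + g(x_i,A) ). Assume the CFL condition α · sup_{x∈[−1,1], a∈E} |f(x,a)| < 1. Then F is nonexpansive in the sup norm: for all 2N_x-periodic V, W : ℤ → ℝ, max_i |F[V](i) − F[W](i)| ≤ max_i |V_i − W_i|. Consequently, if V_{i,j} and V̂_{i,j} both evolve backward in time by the scheme V_{i,j−1} = F[V_{·,j}](i) from terminal data V_{·,N_t} and V̂_{·,N_t}, then the error e_{i,j} = V_{i,j} − V̂_{i,j} satisfies max_i |e_{i,j−1}| ≤ max_i |e_{i,j}| for every j ∈ {1,…,N_t}. (Stability of the upwind scheme against perturbation of the terminal value.) -/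

import Mathlib

/-- A `p`-periodic function on `ℤ` is invariant under adding any integer multiple of `p`. -/
lemma per_int_mul {V : ℤ → ℝ} {p : ℤ} (h : ∀ i, V (i + p) = V i) :
    ∀ (q i : ℤ), V (i + q * p) = V i := by
  intro q
  induction q using Int.induction_on with
  | zero => simp
  | succ n ih =>
      intro i
      have h1 := h (i + (n : ℤ) * p)
      rw [show i + ((n : ℤ) + 1) * p = i + (n : ℤ) * p + p by ring, h1, ih]
  | pred n ih =>
      intro i
      have h1 := h (i + (-(n : ℤ) - 1) * p)
      rw [show i + (-(n : ℤ) - 1) * p + p = i + (-(n : ℤ)) * p by ring, ih] at h1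
      exact h1.symm

/-- the upwind scheme operator is nonexpansive in the sup norm under CFL,
and the backward-in-time scheme is stable against perturbations of the terminal value. -/
theorem stmt_5 (T : ℝ) (hT : 0 < T)
    (E : Set ℝ) (hE : E.Nonempty) (hEc : IsCompact E)
    (f g : ℝ → ℝ → ℝ)
    (hf : ContinuousOn (fun q : ℝ × ℝ => f q.1 q.2) (Set.univ ×ˢ E))
    (hg : ContinuousOn (fun q : ℝ × ℝ => g q.1 q.2) (Set.univ ×ˢ E))
    (Nx Nt : ℕ) (hNx : 1 ≤ Nx) (hNt : 1 ≤ Nt)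
    (Δx Δt α : ℝ) (hΔx : Δx = 1 / (Nx : ℝ)) (hΔt : Δt = T / (Nt : ℝ)) (hα : α = Δt / Δx)
    (F : (ℤ → ℝ) → ℤ → ℝ)
    (hF : ∀ (W : ℤ → ℝ) (i : ℤ),
      F W i = W i + Δt * sInf ((fun A =>
        max (f ((i : ℝ) * Δx) A) 0 * ((W (i+1) - W i) / Δx)
        + min (f ((i : ℝ) * Δx) A) 0 * ((W i - W (i-1)) / Δx)
        + g ((i : ℝ) * Δx) A) '' E))
    (hCFL : α * sSup ((fun q : ℝ × ℝ => |f q.1 q.2|) '' (Set.Icc (-1:ℝ) 1 ×ˢ E)) < 1)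
    (hne : (Finset.Icc (-(Nx : ℤ)) (Nx : ℤ)).Nonempty) :
    (∀ V W : ℤ → ℝ,
      (∀ i : ℤ, V (i + 2 * (Nx : ℤ)) = V i) →
      (∀ i : ℤ, W (i + 2 * (Nx : ℤ)) = W i) →
      (Finset.Icc (-(Nx : ℤ)) (Nx : ℤ)).sup' hne (fun i => |F V i - F W i|)
        ≤ (Finset.Icc (-(Nx : ℤ)) (Nx : ℤ)).sup' hne (fun i => |V i - W i|)) ∧
    (∀ V Vhat : ℤ → ℕ → ℝ,
      (∀ (i : ℤ) (j : ℕ), V (i + 2 * (Nx : ℤ)) j = V i j) →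
      (∀ (i : ℤ) (j : ℕ), Vhat (i + 2 * (Nx : ℤ)) j = Vhat i j) →
      (∀ (i : ℤ) (j : ℕ), 1 ≤ j → j ≤ Nt → V i (j - 1) = F (fun z => V z j) i) →
      (∀ (i : ℤ) (j : ℕ), 1 ≤ j → j ≤ Nt → Vhat i (j - 1) = F (fun z => Vhat z j) i) →
      ∀ j : ℕ, 1 ≤ j → j ≤ Nt →
        (Finset.Icc (-(Nx : ℤ)) (Nx : ℤ)).sup' hne (fun i => |V i (j-1) - Vhat i (j-1)|)
          ≤ (Finset.Icc (-(Nx : ℤ)) (Nx : ℤ)).sup' hne (fun i => |V i j - Vhat i j|)) := by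
  have hNxR : (0:ℝ) < (Nx : ℝ) := by exact_mod_cast Nat.lt_of_lt_of_le Nat.zero_lt_one hNx
  have hNtR : (0:ℝ) < (Nt : ℝ) := by exact_mod_cast Nat.lt_of_lt_of_le Nat.zero_lt_one hNt
  have hΔx0 : 0 < Δx := by rw [hΔx]; positivity
  have hΔt0 : 0 < Δt := by rw [hΔt]; positivity
  have hα0 : 0 < α := by rw [hα]; positivity
  have hΔtα : Δt = α * Δx := by rw [hα]; field_simp
  have hSbdd : BddAbove ((fun q : ℝ × ℝ => |f q.1 q.2|) '' (Set.Icc (-1:ℝ) 1 ×ˢ E)) :=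
    ((isCompact_Icc.prod hEc).image_of_continuousOn
      ((hf.mono (Set.prod_mono (Set.subset_univ _) subset_rfl)).abs)).bddAbove
  -- main nonexpansiveness statement
  have main : ∀ V W : ℤ → ℝ,
      (∀ i : ℤ, V (i + 2 * (Nx : ℤ)) = V i) →
      (∀ i : ℤ, W (i + 2 * (Nx : ℤ)) = W i) →
      (Finset.Icc (-(Nx : ℤ)) (Nx : ℤ)).sup' hne (fun i => |F V i - F W i|)
        ≤ (Finset.Icc (-(Nx : ℤ)) (Nx : ℤ)).sup' hne (fun i => |V i - W i|) := by
    intro V W hV hW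
    set M : ℝ := (Finset.Icc (-(Nx : ℤ)) (Nx : ℤ)).sup' hne (fun i => |V i - W i|) with hM
    have hpZ : (0:ℤ) < 2 * (Nx : ℤ) := by
      have : (1:ℤ) ≤ (Nx : ℤ) := by exact_mod_cast hNx
      linarith
    have hbnd : ∀ k : ℤ, |V k - W k| ≤ M := by
      intro k
      obtain ⟨q, r, hr0, hrp, hk⟩ : ∃ q r : ℤ, 0 ≤ r ∧ r < 2 * (Nx:ℤ) ∧
          k = (r - (Nx:ℤ)) + q * (2 * (Nx:ℤ)) := by
        refine ⟨(k + (Nx:ℤ)) / (2 * (Nx:ℤ)), (k + (Nx:ℤ)) % (2 * (Nx:ℤ)),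
          Int.emod_nonneg _ (ne_of_gt hpZ), Int.emod_lt_of_pos _ hpZ, ?_⟩
        have h1 := Int.mul_ediv_add_emod (k + (Nx:ℤ)) (2 * (Nx:ℤ))
        linarith [h1, mul_comm ((k + (Nx:ℤ)) / (2 * (Nx:ℤ))) (2 * (Nx:ℤ))]
      have h1 : V k = V (r - (Nx:ℤ)) := by rw [hk, per_int_mul hV q]
      have h2 : W k = W (r - (Nx:ℤ)) := by rw [hk, per_int_mul hW q]
      rw [h1, h2]
      exact Finset.le_sup' (fun i => |V i - W i|)
        (Finset.mem_Icc.mpr ⟨by linarith, by linarith⟩)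
    -- one-sided estimate
    have side : ∀ P Q : ℤ → ℝ, (∀ k : ℤ, |P k - Q k| ≤ M) →
        ∀ i ∈ Finset.Icc (-(Nx : ℤ)) (Nx : ℤ), F P i - F Q i ≤ M := by
      intro P Q hPQ i hi
      obtain ⟨hi1, hi2⟩ := Finset.mem_Icc.mp hi
      rw [hF P i, hF Q i]
      have hiR1 : -(Nx:ℝ) ≤ (i:ℝ) := by exact_mod_cast hi1
      have hiR2 : (i:ℝ) ≤ (Nx:ℝ) := by exact_mod_cast hi2
      have hcx : (i:ℝ) * Δx ∈ Set.Icc (-1:ℝ) 1 := by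
        rw [hΔx]
        constructor
        · rw [mul_one_div, le_div_iff₀ hNxR]; linarith
        · rw [mul_one_div, div_le_one hNxR]; linarith
      have hfxc : ContinuousOn (fun A : ℝ => f ((i:ℝ) * Δx) A) E :=
        hf.comp (Continuous.continuousOn (continuous_const.prodMk continuous_id))
          (fun a ha => Set.mem_prod.mpr ⟨Set.mem_univ _, ha⟩)
      have hgxc : ContinuousOn (fun A : ℝ => g ((i:ℝ) * Δx) A) E :=
        hg.comp (Continuous.continuousOn (continuous_const.prodMk continuous_id))
          (fun a ha => Set.mem_prod.mpr ⟨Set.mem_univ _, ha⟩)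
      have hφc : ∀ c1 c2 : ℝ, ContinuousOn (fun A : ℝ =>
          max (f ((i:ℝ) * Δx) A) 0 * c1 + min (f ((i:ℝ) * Δx) A) 0 * c2
          + g ((i:ℝ) * Δx) A) E := fun c1 c2 =>
        (((hfxc.sup continuousOn_const).mul continuousOn_const).add
          ((hfxc.inf continuousOn_const).mul continuousOn_const)).add hgxc
      -- minimizer for Q's infimum
      obtain ⟨a, haE, hamin⟩ := hEc.exists_isMinOn hE
        (hφc ((Q (i+1) - Q i) / Δx) ((Q i - Q (i-1)) / Δx))
      have hamin' : ∀ b ∈ E,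
          max (f ((i:ℝ) * Δx) a) 0 * ((Q (i+1) - Q i) / Δx)
          + min (f ((i:ℝ) * Δx) a) 0 * ((Q i - Q (i-1)) / Δx) + g ((i:ℝ) * Δx) a ≤
          max (f ((i:ℝ) * Δx) b) 0 * ((Q (i+1) - Q i) / Δx)
          + min (f ((i:ℝ) * Δx) b) 0 * ((Q i - Q (i-1)) / Δx) + g ((i:ℝ) * Δx) b :=
        fun b hb => hamin hb
      have hQInf : sInf ((fun A =>
          max (f ((i:ℝ) * Δx) A) 0 * ((Q (i+1) - Q i) / Δx)
          + min (f ((i:ℝ) * Δx) A) 0 * ((Q i - Q (i-1)) / Δx)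
          + g ((i:ℝ) * Δx) A) '' E) =
          max (f ((i:ℝ) * Δx) a) 0 * ((Q (i+1) - Q i) / Δx)
          + min (f ((i:ℝ) * Δx) a) 0 * ((Q i - Q (i-1)) / Δx) + g ((i:ℝ) * Δx) a := by
        refine IsLeast.csInf_eq ⟨⟨a, haE, rfl⟩, ?_⟩
        rintro y ⟨b, hb, rfl⟩
        exact hamin' b hb
      have hPInf : sInf ((fun A =>
          max (f ((i:ℝ) * Δx) A) 0 * ((P (i+1) - P i) / Δx)
          + min (f ((i:ℝ) * Δx) A) 0 * ((P i - P (i-1)) / Δx)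
          + g ((i:ℝ) * Δx) A) '' E) ≤
          max (f ((i:ℝ) * Δx) a) 0 * ((P (i+1) - P i) / Δx)
          + min (f ((i:ℝ) * Δx) a) 0 * ((P i - P (i-1)) / Δx) + g ((i:ℝ) * Δx) a :=
        csInf_le ((hEc.image_of_continuousOn (hφc _ _)).bddBelow) ⟨a, haE, rfl⟩
      rw [hQInf]
      set c : ℝ := f ((i:ℝ) * Δx) a with hc
      have hS : |c| ≤ sSup ((fun q : ℝ × ℝ => |f q.1 q.2|) '' (Set.Icc (-1:ℝ) 1 ×ˢ E)) :=
        le_csSup hSbdd ⟨((i:ℝ) * Δx, a), Set.mem_prod.mpr ⟨hcx, haE⟩, rfl⟩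
      have hαS : α * |c| < 1 :=
        lt_of_le_of_lt (mul_le_mul_of_nonneg_left hS hα0.le) hCFL
      have habs : max c 0 - min c 0 = |c| := by
        rcases le_total 0 c with h | h
        · rw [max_eq_left h, min_eq_right h, abs_of_nonneg h]; ring
        · rw [max_eq_right h, min_eq_left h, abs_of_nonpos h]; ring
      have hb := abs_le.mp (hPQ i)
      have hu := abs_le.mp (hPQ (i+1))
      have hw := abs_le.mp (hPQ (i-1))
      have hp0 : 0 ≤ max c 0 := le_max_right _ _
      have hm0 : min c 0 ≤ 0 := min_le_right _ _
      have hstep : P i + Δt * sInf ((fun A =>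
          max (f ((i:ℝ) * Δx) A) 0 * ((P (i+1) - P i) / Δx)
          + min (f ((i:ℝ) * Δx) A) 0 * ((P i - P (i-1)) / Δx)
          + g ((i:ℝ) * Δx) A) '' E) ≤
          P i + Δt * (max c 0 * ((P (i+1) - P i) / Δx)
          + min c 0 * ((P i - P (i-1)) / Δx) + g ((i:ℝ) * Δx) a) := by
        have := mul_le_mul_of_nonneg_left hPInf hΔt0.le
        linarith
      refine le_trans (sub_le_sub_right hstep (Q i + Δt * (max c 0 * ((Q (i+1) - Q i) / Δx)
          + min c 0 * ((Q i - Q (i-1)) / Δx) + g ((i:ℝ) * Δx) a))) ?_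
      -- now prove the explicit bound
      have hre : P i + Δt * (max c 0 * ((P (i+1) - P i) / Δx)
          + min c 0 * ((P i - P (i-1)) / Δx) + g ((i:ℝ) * Δx) a)
          - (Q i + Δt * (max c 0 * ((Q (i+1) - Q i) / Δx)
          + min c 0 * ((Q i - Q (i-1)) / Δx) + g ((i:ℝ) * Δx) a)) =
          (P i - Q i)
          + α * (max c 0 * ((P (i+1) - Q (i+1)) - (P i - Q i))
            + min c 0 * ((P i - Q i) - (P (i-1) - Q (i-1)))) := by
        rw [hΔtα]; field_simp; ring
      rw [show P i + Δt * (max c 0 * ((P (i+1) - P i) / Δx)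
          + min c 0 * ((P i - P (i-1)) / Δx) + g ((i:ℝ) * Δx) a)
          - (Q i + Δt * (max c 0 * ((Q (i+1) - Q i) / Δx)
          + min c 0 * ((Q i - Q (i-1)) / Δx) + g ((i:ℝ) * Δx) a)) =
          (P i - Q i)
          + α * (max c 0 * ((P (i+1) - Q (i+1)) - (P i - Q i))
            + min c 0 * ((P i - Q i) - (P (i-1) - Q (i-1)))) from hre]
      have hcoef : 0 ≤ 1 - α * (max c 0 - min c 0) := by
        rw [habs]; linarith
      have h1 : 0 ≤ (1 - α * (max c 0 - min c 0)) * (M - (P i - Q i)) :=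
        mul_nonneg hcoef (by linarith [hb.2])
      have h2 : 0 ≤ α * max c 0 * (M - (P (i+1) - Q (i+1))) :=
        mul_nonneg (mul_nonneg hα0.le hp0) (by linarith [hu.2])
      have h3 : 0 ≤ α * (-(min c 0)) * (M - (P (i-1) - Q (i-1))) :=
        mul_nonneg (mul_nonneg hα0.le (by linarith)) (by linarith [hw.2])
      have hsum : (1 - α * (max c 0 - min c 0)) * (M - (P i - Q i))
          + α * max c 0 * (M - (P (i+1) - Q (i+1)))
          + α * (-(min c 0)) * (M - (P (i-1) - Q (i-1)))
          = M - ((P i - Q i)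
          + α * (max c 0 * ((P (i+1) - Q (i+1)) - (P i - Q i))
            + min c 0 * ((P i - Q i) - (P (i-1) - Q (i-1))))) := by ring
      linarith [h1, h2, h3, hsum]
    apply Finset.sup'_le
    intro i hi
    refine abs_sub_le_iff.mpr ⟨side V W hbnd i hi, side W V (fun k => ?_) i hi⟩
    rw [abs_sub_comm]; exact hbnd k
  refine ⟨main, ?_⟩
  intro V Vhat hVp hVhp hVs hVhs j hj1 hj2
  have h1 : (fun i : ℤ => |V i (j-1) - Vhat i (j-1)|) =
      (fun i : ℤ => |F (fun z => V z j) i - F (fun z => Vhat z j) i|) :=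
    funext fun i => by rw [hVs i j hj1 hj2, hVhs i j hj1 hj2]
  rw [h1]
  exact main (fun z => V z j) (fun z => Vhat z j) (fun i => hVp i j) (fun i => hVhp i j)
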